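/- arXiv:2012.04315 — 2 statements merged into one kernel-verified Lean document; each statement's English description precedes it below -/
import Mathlib

section
/- Let Ω, Ω₀ be p×p real symmetric positive definite matrices, ν, ν₀ > 0, and set a = λ_min(Ω₀^{1/2}Ω⁻¹Ω₀^{1/2}) and b = λ_max(Ω₀^{1/2}Ω⁻¹Ω₀^{1/2}). Then for every y ∈ ℝ^p, |log((ν + yᵀΩ⁻¹y)/(ν₀ + yᵀΩ₀⁻¹y))| ≤ max{ |log(min{a, ν/ν₀})|, |log(max{b, ν/ν₀})| }. -/
open Matrix

/-- Rayleigh quotient bounds for a real symmetric matrix. -/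
lemma rayleigh_bounds {n : Type*} [Fintype n] [DecidableEq n] {A : Matrix n n ℝ}
    (hA : A.IsHermitian) (z : n → ℝ) :
    (⨅ i, hA.eigenvalues i) * (z ⬝ᵥ z) ≤ z ⬝ᵥ A *ᵥ z ∧
      z ⬝ᵥ A *ᵥ z ≤ (⨆ i, hA.eigenvalues i) * (z ⬝ᵥ z) := by
  cases isEmpty_or_nonempty n with
  | inl h =>
    simp [dotProduct]
  | inr h =>
    set U : Matrix n n ℝ := (hA.eigenvectorUnitary : Matrix n n ℝ) with hU
    have hUU : U * star U = 1 := (Matrix.mem_unitaryGroup_iff).mp hA.eigenvectorUnitary.2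
    set w : n → ℝ := (star U) *ᵥ z with hw
    have hzz : z ⬝ᵥ z = ∑ i, (w i)^2 := by
      have : z ⬝ᵥ z = z ⬝ᵥ ((U * star U) *ᵥ z) := by rw [hUU, one_mulVec]
      rw [this, ← mulVec_mulVec, dotProduct_mulVec, hw]
      simp [star_eq_conjTranspose, ← mulVec_transpose, dotProduct, pow_two]
    have hAz : z ⬝ᵥ A *ᵥ z = ∑ i, hA.eigenvalues i * (w i)^2 := by
      conv_lhs => rw [hA.spectral_theorem, Unitary.conjStarAlgAut_apply]
      rw [← mulVec_mulVec, ← mulVec_mulVec, dotProduct_mulVec, ← hw]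
      have hzU : z ᵥ* U = w := by
        rw [hw, star_eq_conjTranspose, ← mulVec_transpose]
        simp [vecMul, mulVec, dotProduct, mul_comm]
      rw [hzU]
      simp [mulVec_diagonal, dotProduct, pow_two]
      ring_nf
      exact Finset.sum_congr rfl fun i _ => by ring
    constructor
    · rw [hzz, hAz, Finset.mul_sum]
      refine Finset.sum_le_sum fun i _ => ?_
      exact mul_le_mul_of_nonneg_right (ciInf_le (Finite.bddBelow_range _) i) (sq_nonneg _)
    · rw [hzz, hAz, Finset.mul_sum]
      refine Finset.sum_le_sum fun i _ => ?_
      exact mul_le_mul_of_nonneg_right (le_ciSup (Finite.bddAbove_range _) i) (sq_nonneg _)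

lemma dot_sandwich {n : Type*} [Fintype n] {S B : Matrix n n ℝ} (hS : Sᵀ = S) (u v : n → ℝ) :
    u ⬝ᵥ (S * B * S) *ᵥ v = (S *ᵥ u) ⬝ᵥ B *ᵥ (S *ᵥ v) := by
  rw [← mulVec_mulVec, ← mulVec_mulVec, dotProduct_mulVec u, ← mulVec_transpose, hS]

lemma dot_mul_self' {n : Type*} [Fintype n] {A : Matrix n n ℝ} (hA : Aᵀ = A) (u v : n → ℝ) :
    u ⬝ᵥ (A * A) *ᵥ v = (A *ᵥ u) ⬝ᵥ (A *ᵥ v) := by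
  rw [← mulVec_mulVec, dotProduct_mulVec u, ← mulVec_transpose, hA]


/-- With `a = λ_min(Ω₀^{1/2}Ω⁻¹Ω₀^{1/2})`, `b = λ_max(Ω₀^{1/2}Ω⁻¹Ω₀^{1/2})`,
for every `y ∈ ℝ^p`,
`|log((ν + yᵀΩ⁻¹y)/(ν₀ + yᵀΩ₀⁻¹y))| ≤ max {|log(min{a, ν/ν₀})|, |log(max{b, ν/ν₀})|}`. -/
theorem stmt10 {p : ℕ} (Ω Ω₀ : Matrix (Fin p) (Fin p) ℝ)
    (hΩ : Ω.PosDef) (hΩ₀ : Ω₀.PosDef) (ν ν₀ : ℝ) (hν : 0 < ν) (hν₀ : 0 < ν₀)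
    (hH : ((hΩ₀.posSemidef.1.eigenvectorUnitary.1 *
        diagonal (Real.sqrt ∘ hΩ₀.posSemidef.1.eigenvalues) *
        (star hΩ₀.posSemidef.1.eigenvectorUnitary : Matrix (Fin p) (Fin p) ℝ)) * Ω⁻¹ *
      (hΩ₀.posSemidef.1.eigenvectorUnitary.1 *
        diagonal (Real.sqrt ∘ hΩ₀.posSemidef.1.eigenvalues) *
        (star hΩ₀.posSemidef.1.eigenvectorUnitary : Matrix (Fin p) (Fin p) ℝ))).IsHermitian) :
    ∀ y : Fin p → ℝ,
      |Real.log ((ν + y ⬝ᵥ Ω⁻¹ *ᵥ y) / (ν₀ + y ⬝ᵥ Ω₀⁻¹ *ᵥ y))| ≤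
        max |Real.log (min (⨅ i, hH.eigenvalues i) (ν / ν₀))|
            |Real.log (max (⨆ i, hH.eigenvalues i) (ν / ν₀))| := by
  intro y
  have hνν₀ : 0 < ν / ν₀ := div_pos hν hν₀
  cases isEmpty_or_nonempty (Fin p) with
  | inl hemp =>
    have h1 : y ⬝ᵥ Ω⁻¹ *ᵥ y = 0 := by simp [dotProduct]
    have h0 : y ⬝ᵥ Ω₀⁻¹ *ᵥ y = 0 := by simp [dotProduct]
    rw [h1, h0, add_zero, add_zero, Real.iSup_of_isEmpty, max_eq_right hνν₀.le]
    exact le_max_right _ _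
  | inr hne =>
    set S : Matrix (Fin p) (Fin p) ℝ := hΩ₀.posSemidef.1.eigenvectorUnitary.1 *
        diagonal (Real.sqrt ∘ hΩ₀.posSemidef.1.eigenvalues) *
        (star hΩ₀.posSemidef.1.eigenvectorUnitary : Matrix (Fin p) (Fin p) ℝ) with hSdef
    have hSS : S * S = Ω₀ := by
      have hUU : (star hΩ₀.posSemidef.1.eigenvectorUnitary : Matrix (Fin p) (Fin p) ℝ) *
          hΩ₀.posSemidef.1.eigenvectorUnitary.1 = 1 :=
        Unitary.star_mul_self_of_mem hΩ₀.posSemidef.1.eigenvectorUnitary.2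
      calc S * S = hΩ₀.posSemidef.1.eigenvectorUnitary.1 *
            (diagonal (Real.sqrt ∘ hΩ₀.posSemidef.1.eigenvalues) *
              ((star hΩ₀.posSemidef.1.eigenvectorUnitary : Matrix (Fin p) (Fin p) ℝ) *
                hΩ₀.posSemidef.1.eigenvectorUnitary.1) *
              diagonal (Real.sqrt ∘ hΩ₀.posSemidef.1.eigenvalues)) *
            (star hΩ₀.posSemidef.1.eigenvectorUnitary : Matrix (Fin p) (Fin p) ℝ) := by
            simp only [hSdef, mul_assoc]
        _ = hΩ₀.posSemidef.1.eigenvectorUnitary.1 *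
            diagonal (RCLike.ofReal ∘ hΩ₀.posSemidef.1.eigenvalues) *
            (star hΩ₀.posSemidef.1.eigenvectorUnitary : Matrix (Fin p) (Fin p) ℝ) := by
            rw [hUU, mul_one, diagonal_mul_diagonal]
            congr 2
            ext i j
            by_cases hij : i = j
            · subst hij
              simp [Real.mul_self_sqrt (hΩ₀.posSemidef.eigenvalues_nonneg i)]
            · simp [diagonal_apply, hij]
        _ = Ω₀ := by
            conv_rhs => rw [hΩ₀.posSemidef.1.spectral_theorem, Unitary.conjStarAlgAut_apply]
    have hSsymm : Sᵀ = S := by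
      simp [hSdef, transpose_mul, star_eq_conjTranspose, conjTranspose_eq_transpose_of_trivial,
        mul_assoc]
    have hdetS : S.det ≠ 0 := by
      intro h
      have h2 : S.det * S.det = Ω₀.det := by rw [← det_mul, hSS]
      rw [h, mul_zero] at h2
      exact hΩ₀.det_pos.ne' h2.symm
    have hSinv : S * S⁻¹ = 1 := mul_nonsing_inv S hdetS.isUnit
    have hSinv' : S⁻¹ * S = 1 := nonsing_inv_mul S hdetS.isUnit
    set z : Fin p → ℝ := S⁻¹ *ᵥ y with hzdef
    have hSz : S *ᵥ z = y := by
      rw [hzdef, mulVec_mulVec, hSinv, one_mulVec]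
    set H : Matrix (Fin p) (Fin p) ℝ := S * Ω⁻¹ * S with hHdef
    have hΩinv : Ω⁻¹.PosDef := hΩ.inv
    have hHpos : H.PosDef := by
      refine PosDef.of_dotProduct_mulVec_pos hH fun x hx => ?_
      have hSx : S *ᵥ x ≠ 0 := by
        intro h
        apply hx
        have hx2 : S⁻¹ *ᵥ (S *ᵥ x) = x := by rw [mulVec_mulVec, hSinv', one_mulVec]
        rw [h, mulVec_zero] at hx2
        exact hx2.symm
      have hpos := hΩinv.dotProduct_mulVec_pos hSx
      rw [star_trivial] at hpos ⊢
      rw [hHdef, dot_sandwich hSsymm]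
      exact hpos
    have hq1 : y ⬝ᵥ Ω⁻¹ *ᵥ y = z ⬝ᵥ H *ᵥ z := by
      rw [hHdef, dot_sandwich hSsymm, hSz]
    have hq0 : y ⬝ᵥ Ω₀⁻¹ *ᵥ y = z ⬝ᵥ z := by
      have hΩ₀inv : Ω₀⁻¹ = S⁻¹ * S⁻¹ := by rw [← hSS, Matrix.mul_inv_rev]
      have hSinvT : (S⁻¹)ᵀ = S⁻¹ := by rw [transpose_nonsing_inv, hSsymm]
      rw [hΩ₀inv, dot_mul_self' hSinvT, ← hzdef]
    set a : ℝ := ⨅ i, hH.eigenvalues i with hadef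
    set b : ℝ := ⨆ i, hH.eigenvalues i with hbdef
    have ha_pos : 0 < a := by
      obtain ⟨i₀, hi₀⟩ := Finite.exists_min hH.eigenvalues
      exact lt_of_lt_of_le (hHpos.eigenvalues_pos i₀) (le_ciInf hi₀)
    obtain ⟨hray_lo, hray_hi⟩ := rayleigh_bounds hH z
    have hq0_nonneg : 0 ≤ y ⬝ᵥ Ω₀⁻¹ *ᵥ y := by
      have h := hΩ₀.inv.posSemidef.dotProduct_mulVec_nonneg y
      rwa [star_trivial] at h
    set q1 : ℝ := y ⬝ᵥ Ω⁻¹ *ᵥ y with hq1def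
    set q0 : ℝ := y ⬝ᵥ Ω₀⁻¹ *ᵥ y with hq0def
    have haq : a * q0 ≤ q1 := by rw [hq0, hq1]; exact hray_lo
    have hbq : q1 ≤ b * q0 := by rw [hq0, hq1]; exact hray_hi
    set m : ℝ := min a (ν / ν₀) with hmdef
    set M : ℝ := max b (ν / ν₀) with hMdef
    have hm_pos : 0 < m := lt_min ha_pos hνν₀
    have hden_pos : 0 < ν₀ + q0 := by linarith
    have hmν : m * ν₀ ≤ ν := by
      have := min_le_right a (ν / ν₀)
      calc m * ν₀ ≤ (ν / ν₀) * ν₀ := mul_le_mul_of_nonneg_right this hν₀.le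
        _ = ν := div_mul_cancel₀ ν hν₀.ne'
    have hMν : ν ≤ M * ν₀ := by
      have := le_max_right b (ν / ν₀)
      calc ν = (ν / ν₀) * ν₀ := (div_mul_cancel₀ ν hν₀.ne').symm
        _ ≤ M * ν₀ := mul_le_mul_of_nonneg_right this hν₀.le
    have hmq : m * q0 ≤ q1 :=
      le_trans (mul_le_mul_of_nonneg_right (min_le_left _ _) hq0_nonneg) haq
    have hMq : q1 ≤ M * q0 :=
      le_trans hbq (mul_le_mul_of_nonneg_right (le_max_left _ _) hq0_nonneg)
    have hr_lo : m ≤ (ν + q1) / (ν₀ + q0) := by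
      rw [le_div_iff₀ hden_pos]
      nlinarith
    have hr_hi : (ν + q1) / (ν₀ + q0) ≤ M := by
      rw [div_le_iff₀ hden_pos]
      nlinarith
    have hr_pos : 0 < (ν + q1) / (ν₀ + q0) := lt_of_lt_of_le hm_pos hr_lo
    refine abs_le.mpr ⟨?_, ?_⟩
    · have h1 : Real.log m ≤ Real.log ((ν + q1) / (ν₀ + q0)) := Real.log_le_log hm_pos hr_lo
      have h2 : -|Real.log m| ≤ Real.log m := neg_abs_le _
      have h3 : |Real.log m| ≤ max |Real.log m| |Real.log M| := le_max_left _ _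
      linarith
    · have h1 : Real.log ((ν + q1) / (ν₀ + q0)) ≤ Real.log M := Real.log_le_log hr_pos hr_hi
      have h2 : Real.log M ≤ |Real.log M| := le_abs_self _
      have h3 : |Real.log M| ≤ max |Real.log m| |Real.log M| := le_max_right _ _
      linarith
end

section
/- Fix ν₀ > 2 and a p×p positive definite matrix Ω₀. For every ε > 0 there exists ε* > 0 such that for all ν > 2 and all positive definite Ω with |ν − ν₀| < ε* and d_∞(Ω, Ω₀) < ε*, the Kullback–Leibler divergence between the multivariate t-distributions t_p(ν₀, 0, Ω₀) and t_p(ν, 0, Ω) is less than ε. Equivalently, the max-norm ε*-neighborhood of (ν₀, Ω₀) is contained in the KL ε-neighborhood. -/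
open Matrix MeasureTheory

/-- The density of the `p`-dimensional multivariate t-distribution with `ν` degrees of
freedom, location `0` and positive definite scale matrix `Ω`. -/
noncomputable def tDensity {p : ℕ} (ν : ℝ) (Ω : Matrix (Fin p) (Fin p) ℝ)
    (y : Fin p → ℝ) : ℝ :=
  Real.Gamma ((ν + p) / 2) /
    (Real.Gamma (ν / 2) * (ν * Real.pi) ^ ((p : ℝ) / 2) * Real.sqrt Ω.det) *
    (1 + y ⬝ᵥ Ω⁻¹ *ᵥ y / ν) ^ (-(ν + p) / 2)

/-- The Kullback–Leibler divergence `KL((ν₀,Ω₀),(ν,Ω))` between the multivariate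
t-distributions `t_p(ν₀,0,Ω₀)` and `t_p(ν,0,Ω)`. -/
noncomputable def klT {p : ℕ} (ν₀ : ℝ) (Ω₀ : Matrix (Fin p) (Fin p) ℝ) (ν : ℝ)
    (Ω : Matrix (Fin p) (Fin p) ℝ) : ℝ :=
  ∫ y : Fin p → ℝ, Real.log (tDensity ν₀ Ω₀ y / tDensity ν Ω y) * tDensity ν₀ Ω₀ y

/-! ### Auxiliary lemmas -/

open Filter Topology Finset

section Aux

variable {p : ℕ}

lemma quad_nonneg {M : Matrix (Fin p) (Fin p) ℝ} (hM : M.PosSemidef) (y : Fin p → ℝ) :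
    0 ≤ y ⬝ᵥ M *ᵥ y := by
  have := hM.re_dotProduct_nonneg y
  simpa using this

lemma quad_pos {M : Matrix (Fin p) (Fin p) ℝ} (hM : M.PosDef) {y : Fin p → ℝ} (hy : y ≠ 0) :
    0 < y ⬝ᵥ M *ᵥ y := by
  have := hM.re_dotProduct_pos hy
  simpa using this

lemma quad_smul (M : Matrix (Fin p) (Fin p) ℝ) (c : ℝ) (y : Fin p → ℝ) :
    (c • y) ⬝ᵥ M *ᵥ (c • y) = c ^ 2 * (y ⬝ᵥ M *ᵥ y) := by
  rw [Matrix.mulVec_smul, dotProduct_smul, smul_dotProduct]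
  simp [smul_eq_mul]; ring

lemma quad_abs_le (M : Matrix (Fin p) (Fin p) ℝ) (y : Fin p → ℝ) :
    |y ⬝ᵥ M *ᵥ y| ≤ (∑ i, ∑ j, |M i j|) * ‖y‖ ^ 2 := by
  have hy : ∀ i, |y i| ≤ ‖y‖ := by
    intro i; simpa [Real.norm_eq_abs] using norm_le_pi_norm y i
  calc |y ⬝ᵥ M *ᵥ y| = |∑ i, ∑ j, y i * (M i j * y j)| := by
        simp [dotProduct, Matrix.mulVec, Finset.mul_sum]
    _ ≤ ∑ i, ∑ j, |y i * (M i j * y j)| := by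
        refine (Finset.abs_sum_le_sum_abs _ _).trans ?_
        exact Finset.sum_le_sum fun i _ => Finset.abs_sum_le_sum_abs _ _
    _ ≤ ∑ i, ∑ j, |M i j| * ‖y‖ ^ 2 := by
        refine Finset.sum_le_sum fun i _ => Finset.sum_le_sum fun j _ => ?_
        rw [abs_mul, abs_mul]
        calc |y i| * (|M i j| * |y j|) = |M i j| * (|y i| * |y j|) := by ring
          _ ≤ |M i j| * (‖y‖ * ‖y‖) := by
              exact mul_le_mul_of_nonneg_left
                (mul_le_mul (hy i) (hy j) (abs_nonneg _) (norm_nonneg _)) (abs_nonneg _)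
          _ = |M i j| * ‖y‖ ^ 2 := by ring
    _ = (∑ i, ∑ j, |M i j|) * ‖y‖ ^ 2 := by rw [Finset.sum_mul]; simp [Finset.sum_mul]

lemma exists_quad_lower (M : Matrix (Fin p) (Fin p) ℝ) (hM : M.PosDef) :
    ∃ m > (0:ℝ), ∀ y : Fin p → ℝ, m * ‖y‖ ^ 2 ≤ y ⬝ᵥ M *ᵥ y := by
  rcases isEmpty_or_nonempty (Fin p) with h | h
  · refine ⟨1, one_pos, fun y => ?_⟩
    have : y = 0 := Subsingleton.elim y 0
    subst this; simp
  · have hQc : Continuous fun y : Fin p → ℝ => y ⬝ᵥ M *ᵥ y := by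
      exact (continuous_id.dotProduct (continuous_const.matrix_mulVec continuous_id))
    have hK : IsCompact (Metric.sphere (0 : Fin p → ℝ) 1) := isCompact_sphere _ _
    have hne : (Metric.sphere (0 : Fin p → ℝ) 1).Nonempty :=
      NormedSpace.sphere_nonempty.mpr zero_le_one
    obtain ⟨z, hz, hmin⟩ := hK.exists_isMinOn hne hQc.continuousOn
    have hz1 : ‖z‖ = 1 := by simpa using hz
    have hz0 : z ≠ 0 := by intro h; rw [h] at hz1; simp at hz1
    refine ⟨z ⬝ᵥ M *ᵥ z, quad_pos hM hz0, fun y => ?_⟩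
    rcases eq_or_ne y 0 with rfl | hy0
    · simp
    · have hny : (0:ℝ) < ‖y‖ := norm_pos_iff.mpr hy0
      set u := ‖y‖⁻¹ • y with hu
      have hu1 : ‖u‖ = 1 := by
        rw [hu, norm_smul]; simp [abs_of_pos (inv_pos.mpr hny), inv_mul_cancel₀ hny.ne']
      have huS : u ∈ Metric.sphere (0 : Fin p → ℝ) 1 := by simpa using hu1
      have hmin' : z ⬝ᵥ M *ᵥ z ≤ u ⬝ᵥ M *ᵥ u := hmin huS
      have hyu : y = ‖y‖ • u := by
        rw [hu, smul_smul, mul_inv_cancel₀ hny.ne', one_smul]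
      have key : y ⬝ᵥ M *ᵥ y = ‖y‖ ^ 2 * (u ⬝ᵥ M *ᵥ u) := by
        have h2 := quad_smul M ‖y‖ u
        rw [← hyu] at h2
        exact h2
      calc (z ⬝ᵥ M *ᵥ z) * ‖y‖ ^ 2 ≤ (u ⬝ᵥ M *ᵥ u) * ‖y‖ ^ 2 := by
            exact mul_le_mul_of_nonneg_right hmin' (sq_nonneg _)
        _ = y ⬝ᵥ M *ᵥ y := by rw [key]; ring

lemma rpow_neg_anti {a b s : ℝ} (ha : 0 < a) (hab : a ≤ b) (hs : 0 ≤ s) :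
    b ^ (-s) ≤ a ^ (-s) := by
  rw [Real.rpow_neg (ha.trans_le hab).le, Real.rpow_neg ha.le]
  exact inv_anti₀ (Real.rpow_pos_of_pos ha s) (Real.rpow_le_rpow ha.le hab hs)

/-- The normalizing constant of the t density. -/
noncomputable def cT (p : ℕ) (ν : ℝ) (Ω : Matrix (Fin p) (Fin p) ℝ) : ℝ :=
  Real.Gamma ((ν + p) / 2) /
    (Real.Gamma (ν / 2) * (ν * Real.pi) ^ ((p : ℝ) / 2) * Real.sqrt Ω.det)

lemma tDensity_eq (ν : ℝ) (Ω : Matrix (Fin p) (Fin p) ℝ) (y : Fin p → ℝ) :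
    tDensity ν Ω y = cT p ν Ω * (1 + y ⬝ᵥ Ω⁻¹ *ᵥ y / ν) ^ (-((ν + p) / 2)) := by
  rw [tDensity, cT, neg_div]

lemma cT_pos {ν : ℝ} (hν : 0 < ν) {Ω : Matrix (Fin p) (Fin p) ℝ} (hΩ : Ω.PosDef) :
    0 < cT p ν Ω := by
  have h1 : 0 < Real.Gamma ((ν + p) / 2) := Real.Gamma_pos_of_pos (by positivity)
  have h2 : 0 < Real.Gamma (ν / 2) := Real.Gamma_pos_of_pos (by positivity)
  have h3 : (0:ℝ) < (ν * Real.pi) ^ ((p : ℝ) / 2) :=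
    Real.rpow_pos_of_pos (by positivity) _
  have h4 : 0 < Real.sqrt Ω.det := Real.sqrt_pos.mpr hΩ.det_pos
  exact div_pos h1 (by positivity)

lemma base_one_le {ν : ℝ} (hν : 0 < ν) {Ω : Matrix (Fin p) (Fin p) ℝ} (hΩ : Ω.PosDef)
    (y : Fin p → ℝ) : 1 ≤ 1 + y ⬝ᵥ Ω⁻¹ *ᵥ y / ν := by
  have h := quad_nonneg hΩ.inv.posSemidef y
  have : 0 ≤ y ⬝ᵥ Ω⁻¹ *ᵥ y / ν := div_nonneg h hν.le
  linarith

lemma tDensity_pos {ν : ℝ} (hν : 0 < ν) {Ω : Matrix (Fin p) (Fin p) ℝ} (hΩ : Ω.PosDef)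
    (y : Fin p → ℝ) : 0 < tDensity ν Ω y := by
  rw [tDensity_eq]
  exact mul_pos (cT_pos hν hΩ)
    (Real.rpow_pos_of_pos (lt_of_lt_of_le one_pos (base_one_le hν hΩ y)) _)

lemma log_tDensity {ν : ℝ} (hν : 0 < ν) {Ω : Matrix (Fin p) (Fin p) ℝ} (hΩ : Ω.PosDef)
    (y : Fin p → ℝ) :
    Real.log (tDensity ν Ω y) =
      Real.log (cT p ν Ω) - (ν + p) / 2 * Real.log (1 + y ⬝ᵥ Ω⁻¹ *ᵥ y / ν) := by
  have hb : (0:ℝ) < 1 + y ⬝ᵥ Ω⁻¹ *ᵥ y / ν := lt_of_lt_of_le one_pos (base_one_le hν hΩ y)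
  rw [tDensity_eq, Real.log_mul (cT_pos hν hΩ).ne' (Real.rpow_pos_of_pos hb _).ne',
    Real.log_rpow hb]
  ring

lemma abs_log_tDensity_le {ν : ℝ} (hν : 2 < ν) {Ω : Matrix (Fin p) (Fin p) ℝ} (hΩ : Ω.PosDef)
    {c₂ KC s' : ℝ} {y : Fin p → ℝ}
    (hq : y ⬝ᵥ Ω⁻¹ *ᵥ y ≤ c₂ * ‖y‖ ^ 2)
    (hKC : |Real.log (cT p ν Ω)| ≤ KC) (hs : (ν + p) / 2 ≤ s') :
    |Real.log (tDensity ν Ω y)| ≤ KC + s' * Real.log (1 + c₂ * ‖y‖ ^ 2) := by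
  have hν0 : (0:ℝ) < ν := by linarith
  have hqn : 0 ≤ y ⬝ᵥ Ω⁻¹ *ᵥ y := quad_nonneg hΩ.inv.posSemidef y
  have hb1 : 1 ≤ 1 + y ⬝ᵥ Ω⁻¹ *ᵥ y / ν := base_one_le hν0 hΩ y
  have hble : 1 + y ⬝ᵥ Ω⁻¹ *ᵥ y / ν ≤ 1 + c₂ * ‖y‖ ^ 2 := by
    have h1 : y ⬝ᵥ Ω⁻¹ *ᵥ y / ν ≤ y ⬝ᵥ Ω⁻¹ *ᵥ y := div_le_self hqn (by linarith)
    linarith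
  have hlogb0 : 0 ≤ Real.log (1 + y ⬝ᵥ Ω⁻¹ *ᵥ y / ν) := Real.log_nonneg hb1
  have hlogble : Real.log (1 + y ⬝ᵥ Ω⁻¹ *ᵥ y / ν) ≤ Real.log (1 + c₂ * ‖y‖ ^ 2) :=
    Real.log_le_log (by linarith) hble
  have hs0 : 0 ≤ (ν + p) / 2 := by positivity
  rw [log_tDensity hν0 hΩ]
  calc |Real.log (cT p ν Ω) - (ν + p) / 2 * Real.log (1 + y ⬝ᵥ Ω⁻¹ *ᵥ y / ν)|
      ≤ |Real.log (cT p ν Ω)| + (ν + p) / 2 * Real.log (1 + y ⬝ᵥ Ω⁻¹ *ᵥ y / ν) := by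
        have h := abs_sub (Real.log (cT p ν Ω))
          ((ν + p) / 2 * Real.log (1 + y ⬝ᵥ Ω⁻¹ *ᵥ y / ν))
        rw [abs_of_nonneg (mul_nonneg hs0 hlogb0)] at h
        exact h
    _ ≤ KC + s' * Real.log (1 + c₂ * ‖y‖ ^ 2) := by
        refine add_le_add hKC ?_
        calc (ν + p) / 2 * Real.log (1 + y ⬝ᵥ Ω⁻¹ *ᵥ y / ν)
            ≤ s' * Real.log (1 + y ⬝ᵥ Ω⁻¹ *ᵥ y / ν) := mul_le_mul_of_nonneg_right hs hlogb0
          _ ≤ s' * Real.log (1 + c₂ * ‖y‖ ^ 2) :=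
              mul_le_mul_of_nonneg_left hlogble (le_trans hs0 hs)

lemma tDensity_upper {ν₀ : ℝ} (hν₀ : 0 < ν₀) {Ω₀ : Matrix (Fin p) (Fin p) ℝ} (hΩ₀ : Ω₀.PosDef)
    {m : ℝ} (hm : 0 < m) (hmq : ∀ y : Fin p → ℝ, m * ‖y‖ ^ 2 ≤ y ⬝ᵥ Ω₀⁻¹ *ᵥ y)
    (y : Fin p → ℝ) :
    tDensity ν₀ Ω₀ y ≤ cT p ν₀ Ω₀ * (min 1 (m / ν₀)) ^ (-((ν₀ + p) / 2)) *
      (1 + ‖y‖ ^ 2) ^ (-((ν₀ + p) / 2)) := by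
  set κ := min 1 (m / ν₀) with hκ
  have hκ0 : 0 < κ := lt_min one_pos (div_pos hm hν₀)
  have ht0 : (0:ℝ) ≤ ‖y‖ ^ 2 := sq_nonneg _
  have hbase : κ * (1 + ‖y‖ ^ 2) ≤ 1 + y ⬝ᵥ Ω₀⁻¹ *ᵥ y / ν₀ := by
    have h2 : κ * ‖y‖ ^ 2 ≤ m / ν₀ * ‖y‖ ^ 2 :=
      mul_le_mul_of_nonneg_right (min_le_right _ _) ht0
    have h4 : m * ‖y‖ ^ 2 / ν₀ ≤ y ⬝ᵥ Ω₀⁻¹ *ᵥ y / ν₀ := by gcongr; exact hmq y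
    have h5 : κ ≤ 1 := min_le_left _ _
    have h6 : m / ν₀ * ‖y‖ ^ 2 = m * ‖y‖ ^ 2 / ν₀ := by ring
    nlinarith
  have hb0 : 0 < κ * (1 + ‖y‖ ^ 2) := by positivity
  have h6 : (1 + y ⬝ᵥ Ω₀⁻¹ *ᵥ y / ν₀) ^ (-((ν₀ + p) / 2)) ≤
      (κ * (1 + ‖y‖ ^ 2)) ^ (-((ν₀ + p) / 2)) :=
    rpow_neg_anti hb0 hbase (by positivity)
  have h7 : (κ * (1 + ‖y‖ ^ 2)) ^ (-((ν₀ + p) / 2)) =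
      κ ^ (-((ν₀ + p) / 2)) * (1 + ‖y‖ ^ 2) ^ (-((ν₀ + p) / 2)) :=
    Real.mul_rpow hκ0.le (by positivity)
  rw [tDensity_eq]
  calc cT p ν₀ Ω₀ * (1 + y ⬝ᵥ Ω₀⁻¹ *ᵥ y / ν₀) ^ (-((ν₀ + p) / 2))
      ≤ cT p ν₀ Ω₀ * (κ * (1 + ‖y‖ ^ 2)) ^ (-((ν₀ + p) / 2)) :=
        mul_le_mul_of_nonneg_left h6 (cT_pos hν₀ hΩ₀).le
    _ = cT p ν₀ Ω₀ * κ ^ (-((ν₀ + p) / 2)) * (1 + ‖y‖ ^ 2) ^ (-((ν₀ + p) / 2)) := by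
        rw [h7]; ring

lemma log_le_sqrt_bound {c₂ t : ℝ} (ht : 0 ≤ t) (hc : 0 ≤ c₂ * t) :
    Real.log (1 + c₂ * t) ≤ 2 * Real.sqrt (max 1 c₂) * (1 + t) ^ ((1:ℝ)/2) := by
  have hx1 : (1:ℝ) ≤ 1 + c₂ * t := by linarith
  have h1 : Real.log (1 + c₂ * t) = 2 * Real.log (Real.sqrt (1 + c₂ * t)) := by
    rw [Real.log_sqrt (by linarith)]; ring
  have h2 : Real.log (Real.sqrt (1 + c₂ * t)) ≤ Real.sqrt (1 + c₂ * t) := by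
    have := Real.log_le_sub_one_of_pos (Real.sqrt_pos.mpr (by linarith : (0:ℝ) < 1 + c₂ * t))
    linarith
  have h3 : 1 + c₂ * t ≤ max 1 c₂ * (1 + t) := by
    have hm1 : (1:ℝ) ≤ max 1 c₂ := le_max_left _ _
    have hm2 : c₂ * t ≤ max 1 c₂ * t := mul_le_mul_of_nonneg_right (le_max_right _ _) ht
    nlinarith
  have h4 : Real.sqrt (1 + c₂ * t) ≤ Real.sqrt (max 1 c₂) * Real.sqrt (1 + t) := by
    rw [← Real.sqrt_mul (by positivity : (0:ℝ) ≤ max 1 c₂)]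
    exact Real.sqrt_le_sqrt h3
  have h5 : Real.sqrt (1 + t) = (1 + t) ^ ((1:ℝ)/2) := Real.sqrt_eq_rpow _
  have hs0 : 0 ≤ Real.sqrt (max 1 c₂) := Real.sqrt_nonneg _
  calc Real.log (1 + c₂ * t) = 2 * Real.log (Real.sqrt (1 + c₂ * t)) := h1
    _ ≤ 2 * (Real.sqrt (max 1 c₂) * Real.sqrt (1 + t)) := by linarith
    _ = 2 * Real.sqrt (max 1 c₂) * (1 + t) ^ ((1:ℝ)/2) := by rw [h5]; ring

lemma rpow_decay_le {a r : ℝ} (ha : 0 ≤ a) (hr : 0 ≤ r) :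
    (1 + a ^ 2) ^ (-r) ≤ 2 ^ r * (1 + a) ^ (-(2 * r)) := by
  have h1 : (1 + a) ^ 2 / 2 ≤ 1 + a ^ 2 := by nlinarith [sq_nonneg (1 - a)]
  have h2 : (0:ℝ) < (1 + a) ^ 2 / 2 := by positivity
  have h3 : (1 + a ^ 2) ^ (-r) ≤ ((1 + a) ^ 2 / 2) ^ (-r) := rpow_neg_anti h2 h1 hr
  have h4 : (((1 + a) ^ 2 : ℝ) / 2) ^ (-r) = ((1 + a) ^ 2 : ℝ) ^ (-r) / 2 ^ (-r) :=
    Real.div_rpow (by positivity : (0:ℝ) ≤ (1 + a) ^ 2) (by norm_num : (0:ℝ) ≤ 2) (-r)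
  have h5 : ((1 + a) ^ 2 : ℝ) ^ (-r) = (1 + a) ^ (-(2 * r)) := by
    rw [← Real.rpow_natCast (1 + a) 2, ← Real.rpow_mul (by positivity)]
    norm_num
  have h6 : ((2:ℝ)) ^ (-r) = ((2:ℝ) ^ r)⁻¹ := Real.rpow_neg (by norm_num) r
  have h7 : (0:ℝ) < (2:ℝ) ^ r := Real.rpow_pos_of_pos (by norm_num) r
  calc (1 + a ^ 2) ^ (-r) ≤ ((1 + a) ^ 2 / 2) ^ (-r) := h3
    _ = (1 + a) ^ (-(2 * r)) / ((2:ℝ) ^ r)⁻¹ := by rw [h4, h5, h6]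
    _ = 2 ^ r * (1 + a) ^ (-(2 * r)) := by field_simp

end Aux


set_option maxHeartbeats 1000000 in
lemma master_bound {p : ℕ} {ν₀ : ℝ} (hν₀ : 2 < ν₀) {Ω₀ : Matrix (Fin p) (Fin p) ℝ}
    (hΩ₀ : Ω₀.PosDef) {m : ℝ} (hm : 0 < m)
    (hmq : ∀ y : Fin p → ℝ, m * ‖y‖ ^ 2 ≤ y ⬝ᵥ Ω₀⁻¹ *ᵥ y)
    {ν : ℝ} {Ω : Matrix (Fin p) (Fin p) ℝ} (hν : 2 < ν) (hΩ : Ω.PosDef)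
    (hν1 : |ν - ν₀| ≤ 1)
    (hsum : (∑ i, ∑ j, |Ω⁻¹ i j - Ω₀⁻¹ i j|) ≤ 1)
    (hlogC : |Real.log (cT p ν Ω) - Real.log (cT p ν₀ Ω₀)| ≤ 1)
    (y : Fin p → ℝ) :
    |Real.log (tDensity ν₀ Ω₀ y / tDensity ν Ω y) * tDensity ν₀ Ω₀ y| ≤
      (2 * (|Real.log (cT p ν₀ Ω₀)| + 1) +
        (ν₀ + 1 + p) * (2 * Real.sqrt (max 1 ((∑ i, ∑ j, |Ω₀⁻¹ i j|) + 1)))) *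
        (cT p ν₀ Ω₀ * (min 1 (m / ν₀)) ^ (-((ν₀ + p) / 2))) * 2 ^ ((ν₀ + p) / 2 - 1 / 2) *
        (1 + ‖y‖) ^ (-(ν₀ + (p : ℝ) - 1)) := by
  have hν₀0 : (0:ℝ) < ν₀ := by linarith
  have hν00 : (0:ℝ) < ν := by linarith
  set s₀ : ℝ := (ν₀ + p) / 2 with hs₀
  set c₂ : ℝ := (∑ i, ∑ j, |Ω₀⁻¹ i j|) + 1 with hc₂
  have hsum0 : 0 ≤ ∑ i, ∑ j, |Ω₀⁻¹ i j| :=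
    Finset.sum_nonneg fun i _ => Finset.sum_nonneg fun j _ => abs_nonneg _
  have hc₂0 : 0 ≤ c₂ := by rw [hc₂]; linarith
  have ht0 : (0:ℝ) ≤ ‖y‖ ^ 2 := sq_nonneg _
  have hc2t : 0 ≤ c₂ * ‖y‖ ^ 2 := mul_nonneg hc₂0 ht0
  -- quadratic form bounds
  have hq : y ⬝ᵥ Ω⁻¹ *ᵥ y ≤ c₂ * ‖y‖ ^ 2 := by
    have h1 := quad_abs_le Ω⁻¹ y
    have h2 : (∑ i, ∑ j, |Ω⁻¹ i j|) ≤ c₂ := by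
      have h3 : (∑ i, ∑ j, |Ω⁻¹ i j|) ≤
          ∑ i, ∑ j, (|Ω₀⁻¹ i j| + |Ω⁻¹ i j - Ω₀⁻¹ i j|) := by
        refine Finset.sum_le_sum fun i _ => Finset.sum_le_sum fun j _ => ?_
        have h4 := abs_sub_abs_le_abs_sub (Ω⁻¹ i j) (Ω₀⁻¹ i j)
        linarith
      have h5 : (∑ i, ∑ j, (|Ω₀⁻¹ i j| + |Ω⁻¹ i j - Ω₀⁻¹ i j|)) =
          (∑ i, ∑ j, |Ω₀⁻¹ i j|) + ∑ i, ∑ j, |Ω⁻¹ i j - Ω₀⁻¹ i j| := by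
        rw [← Finset.sum_add_distrib]
        exact Finset.sum_congr rfl fun i _ => Finset.sum_add_distrib
      rw [hc₂]; linarith
    calc y ⬝ᵥ Ω⁻¹ *ᵥ y ≤ |y ⬝ᵥ Ω⁻¹ *ᵥ y| := le_abs_self _
      _ ≤ (∑ i, ∑ j, |Ω⁻¹ i j|) * ‖y‖ ^ 2 := h1
      _ ≤ c₂ * ‖y‖ ^ 2 := mul_le_mul_of_nonneg_right h2 ht0
  have hq₀ : y ⬝ᵥ Ω₀⁻¹ *ᵥ y ≤ c₂ * ‖y‖ ^ 2 := by
    calc y ⬝ᵥ Ω₀⁻¹ *ᵥ y ≤ |y ⬝ᵥ Ω₀⁻¹ *ᵥ y| := le_abs_self _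
      _ ≤ (∑ i, ∑ j, |Ω₀⁻¹ i j|) * ‖y‖ ^ 2 := quad_abs_le Ω₀⁻¹ y
      _ ≤ c₂ * ‖y‖ ^ 2 := mul_le_mul_of_nonneg_right (by rw [hc₂]; linarith) ht0
  set KC : ℝ := |Real.log (cT p ν₀ Ω₀)| + 1 with hKCdef
  have hKC0 : 0 ≤ KC := by rw [hKCdef]; positivity
  have hKC : |Real.log (cT p ν Ω)| ≤ KC := by
    have := abs_sub_abs_le_abs_sub (Real.log (cT p ν Ω)) (Real.log (cT p ν₀ Ω₀))
    rw [hKCdef]; linarith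
  have hKC₀ : |Real.log (cT p ν₀ Ω₀)| ≤ KC := by rw [hKCdef]; linarith
  set s' : ℝ := (ν₀ + 1 + p) / 2 with hs'
  have habs : |ν - ν₀| ≤ 1 := hν1
  have hνle : ν ≤ ν₀ + 1 := by
    have := abs_le.mp habs; linarith [this.2]
  have hsle : (ν + p) / 2 ≤ s' := by rw [hs']; linarith
  have hsle₀ : (ν₀ + p) / 2 ≤ s' := by rw [hs']; linarith
  have hs'0 : 0 ≤ s' := by rw [hs']; positivity
  have hlogd := abs_log_tDensity_le hν hΩ hq hKC hsle
  have hlogd₀ := abs_log_tDensity_le hν₀ hΩ₀ hq₀ hKC₀ hsle₀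
  have hd₀pos : 0 < tDensity ν₀ Ω₀ y := tDensity_pos hν₀0 hΩ₀ y
  have hdpos : 0 < tDensity ν Ω y := tDensity_pos hν00 hΩ y
  have habsdiv : |Real.log (tDensity ν₀ Ω₀ y / tDensity ν Ω y)| ≤
      |Real.log (tDensity ν₀ Ω₀ y)| + |Real.log (tDensity ν Ω y)| := by
    rw [Real.log_div hd₀pos.ne' hdpos.ne']
    exact abs_sub _ _
  set L : ℝ := Real.log (1 + c₂ * ‖y‖ ^ 2) with hLdef
  have hL0 : 0 ≤ L := Real.log_nonneg (by linarith)
  set Gs : ℝ := 2 * Real.sqrt (max 1 c₂) with hGs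
  have hGs0 : 0 ≤ Gs := by rw [hGs]; positivity
  have hLle : L ≤ Gs * (1 + ‖y‖ ^ 2) ^ ((1:ℝ)/2) := by
    have := log_le_sqrt_bound ht0 hc2t
    rw [hLdef, hGs]; linarith
  set R : ℝ := (1 + ‖y‖ ^ 2) ^ ((1:ℝ)/2) with hR
  have hR1 : 1 ≤ R := by
    rw [hR]
    exact Real.one_le_rpow (by linarith) (by norm_num)
  have hR0 : 0 ≤ R := by linarith
  set A : ℝ := 2 * KC + (ν₀ + 1 + p) * Gs with hA
  have hcoef0 : (0:ℝ) ≤ ν₀ + 1 + p := by positivity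
  have hA0 : 0 ≤ A := by rw [hA]; positivity
  have hmain : |Real.log (tDensity ν₀ Ω₀ y / tDensity ν Ω y)| ≤ A * R := by
    have h1 : |Real.log (tDensity ν₀ Ω₀ y / tDensity ν Ω y)| ≤ 2 * KC + (ν₀ + 1 + p) * L := by
      have h2 : 2 * s' = ν₀ + 1 + p := by rw [hs']; ring
      calc |Real.log (tDensity ν₀ Ω₀ y / tDensity ν Ω y)|
          ≤ (KC + s' * L) + (KC + s' * L) := by
            have h6 := add_le_add hlogd₀ hlogd
            linarith
        _ = 2 * KC + (ν₀ + 1 + p) * L := by rw [← h2]; ring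
    have h3 : (ν₀ + 1 + p) * L ≤ (ν₀ + 1 + p) * (Gs * R) :=
      mul_le_mul_of_nonneg_left hLle hcoef0
    have h4 : 2 * KC ≤ 2 * KC * R := by nlinarith
    have h5 : A * R = 2 * KC * R + (ν₀ + 1 + p) * (Gs * R) := by rw [hA]; ring
    linarith
  set D : ℝ := cT p ν₀ Ω₀ * (min 1 (m / ν₀)) ^ (-s₀) with hD
  have hD0 : 0 < D := by
    rw [hD]
    exact mul_pos (cT_pos hν₀0 hΩ₀)
      (Real.rpow_pos_of_pos (lt_min one_pos (div_pos hm hν₀0)) _)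
  have hupper : tDensity ν₀ Ω₀ y ≤ D * (1 + ‖y‖ ^ 2) ^ (-s₀) := by
    have := tDensity_upper hν₀0 hΩ₀ hm hmq y
    rw [hD, hs₀]; exact this
  have hp0 : (0:ℝ) ≤ (p:ℝ) := Nat.cast_nonneg p
  have hr0 : (0:ℝ) ≤ s₀ - 1/2 := by rw [hs₀]; linarith
  have hmerge : R * (1 + ‖y‖ ^ 2) ^ (-s₀) = (1 + ‖y‖ ^ 2) ^ (-(s₀ - 1/2)) := by
    rw [hR, ← Real.rpow_add (by positivity : (0:ℝ) < 1 + ‖y‖ ^ 2)]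
    congr 1; ring
  have hexp : -(2 * (s₀ - 1/2)) = -(ν₀ + (p:ℝ) - 1) := by rw [hs₀]; ring
  calc |Real.log (tDensity ν₀ Ω₀ y / tDensity ν Ω y) * tDensity ν₀ Ω₀ y|
      = |Real.log (tDensity ν₀ Ω₀ y / tDensity ν Ω y)| * tDensity ν₀ Ω₀ y := by
        rw [abs_mul, abs_of_pos hd₀pos]
    _ ≤ (A * R) * (D * (1 + ‖y‖ ^ 2) ^ (-s₀)) :=
        mul_le_mul hmain hupper hd₀pos.le (mul_nonneg hA0 hR0)
    _ = (A * D) * (R * (1 + ‖y‖ ^ 2) ^ (-s₀)) := by ring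
    _ = (A * D) * (1 + ‖y‖ ^ 2) ^ (-(s₀ - 1/2)) := by rw [hmerge]
    _ ≤ (A * D) * (2 ^ (s₀ - 1/2) * (1 + ‖y‖) ^ (-(2 * (s₀ - 1/2)))) :=
        mul_le_mul_of_nonneg_left (rpow_decay_le (norm_nonneg y) hr0)
          (mul_nonneg hA0 hD0.le)
    _ = A * D * 2 ^ (s₀ - 1/2) * (1 + ‖y‖) ^ (-(ν₀ + (p:ℝ) - 1)) := by
        rw [hexp]; ring

lemma tDensity_continuous {p : ℕ} {ν : ℝ} (hν : 0 < ν) {Ω : Matrix (Fin p) (Fin p) ℝ}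
    (hΩ : Ω.PosDef) : Continuous (tDensity ν Ω) := by
  have hb : Continuous fun y : Fin p → ℝ => 1 + y ⬝ᵥ Ω⁻¹ *ᵥ y / ν :=
    continuous_const.add ((continuous_id.dotProduct
      (continuous_const.matrix_mulVec continuous_id)).div_const ν)
  have hbn : ∀ y : Fin p → ℝ, (1 + y ⬝ᵥ Ω⁻¹ *ᵥ y / ν) ≠ 0 := fun y =>
    (lt_of_lt_of_le one_pos (base_one_le hν hΩ y)).ne'
  unfold tDensity
  exact continuous_const.mul (hb.rpow_const fun y => Or.inl (hbn y))

lemma cT_contAt {p : ℕ} {ν₀ : ℝ} (hν₀ : 0 < ν₀) {Ω₀ : Matrix (Fin p) (Fin p) ℝ}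
    (hΩ₀ : Ω₀.PosDef) :
    ContinuousAt (fun x : ℝ × (Fin p → Fin p → ℝ) => cT p x.1 (Matrix.of x.2))
      (ν₀, fun i j => Ω₀ i j) := by
  have hof : Continuous fun x : ℝ × (Fin p → Fin p → ℝ) => Matrix.of x.2 := continuous_snd
  have hdet : ContinuousAt (fun x : ℝ × (Fin p → Fin p → ℝ) => (Matrix.of x.2).det)
      (ν₀, fun i j => Ω₀ i j) := hof.matrix_det.continuousAt
  have hG1 : ContinuousAt (fun x : ℝ × (Fin p → Fin p → ℝ) =>
      Real.Gamma ((x.1 + p) / 2)) (ν₀, fun i j => Ω₀ i j) := by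
    have h1 : ∀ m : ℕ, (ν₀ + (p:ℝ)) / 2 ≠ -m := by
      intro m
      have h2 : (0:ℝ) < (ν₀ + (p:ℝ)) / 2 := by positivity
      have h3 : -(m:ℝ) ≤ 0 := neg_nonpos.mpr (Nat.cast_nonneg m)
      exact ne_of_gt (lt_of_le_of_lt h3 h2)
    have hinner : ContinuousAt (fun x : ℝ × (Fin p → Fin p → ℝ) => (x.1 + (p:ℝ)) / 2)
        (ν₀, fun i j => Ω₀ i j) :=
      ((continuous_fst.add continuous_const).div_const 2).continuousAt
    have h4 : Tendsto (fun x : ℝ × (Fin p → Fin p → ℝ) => (x.1 + (p:ℝ)) / 2)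
        (𝓝 (ν₀, fun i j => Ω₀ i j)) (𝓝 ((ν₀ + (p:ℝ)) / 2)) := hinner
    exact (Real.differentiableAt_Gamma h1).continuousAt.tendsto.comp h4
  have hG2 : ContinuousAt (fun x : ℝ × (Fin p → Fin p → ℝ) =>
      Real.Gamma (x.1 / 2)) (ν₀, fun i j => Ω₀ i j) := by
    have h1 : ∀ m : ℕ, ν₀ / 2 ≠ -m := by
      intro m
      have h2 : (0:ℝ) < ν₀ / 2 := by positivity
      have h3 : -(m:ℝ) ≤ 0 := neg_nonpos.mpr (Nat.cast_nonneg m)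
      exact ne_of_gt (lt_of_le_of_lt h3 h2)
    have hinner : ContinuousAt (fun x : ℝ × (Fin p → Fin p → ℝ) => x.1 / 2)
        (ν₀, fun i j => Ω₀ i j) :=
      (continuous_fst.div_const 2).continuousAt
    have h4 : Tendsto (fun x : ℝ × (Fin p → Fin p → ℝ) => x.1 / 2)
        (𝓝 (ν₀, fun i j => Ω₀ i j)) (𝓝 (ν₀ / 2)) := hinner
    exact (Real.differentiableAt_Gamma h1).continuousAt.tendsto.comp h4
  have hpow : ContinuousAt (fun x : ℝ × (Fin p → Fin p → ℝ) =>
      (x.1 * Real.pi) ^ ((p:ℝ) / 2)) (ν₀, fun i j => Ω₀ i j) :=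
    ContinuousAt.rpow_const (continuous_fst.mul continuous_const).continuousAt
      (Or.inl (by positivity : (0:ℝ) < ν₀ * Real.pi).ne')
  have hsqrt : ContinuousAt (fun x : ℝ × (Fin p → Fin p → ℝ) =>
      Real.sqrt (Matrix.of x.2).det) (ν₀, fun i j => Ω₀ i j) :=
    Real.continuous_sqrt.continuousAt.comp hdet
  have hden : ContinuousAt (fun x : ℝ × (Fin p → Fin p → ℝ) =>
      Real.Gamma (x.1 / 2) * (x.1 * Real.pi) ^ ((p:ℝ) / 2) *
        Real.sqrt (Matrix.of x.2).det) (ν₀, fun i j => Ω₀ i j) := (hG2.mul hpow).mul hsqrt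
  have hne : Real.Gamma (ν₀ / 2) * (ν₀ * Real.pi) ^ ((p:ℝ) / 2) * Real.sqrt Ω₀.det ≠ 0 := by
    have h1 : 0 < Real.Gamma (ν₀ / 2) := Real.Gamma_pos_of_pos (by positivity)
    have h2 : (0:ℝ) < (ν₀ * Real.pi) ^ ((p:ℝ) / 2) := Real.rpow_pos_of_pos (by positivity) _
    have h3 : 0 < Real.sqrt Ω₀.det := Real.sqrt_pos.mpr hΩ₀.det_pos
    positivity
  unfold cT
  exact hG1.div hden hne

lemma tDensity_contAt {p : ℕ} {ν₀ : ℝ} (hν₀ : 0 < ν₀) {Ω₀ : Matrix (Fin p) (Fin p) ℝ}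
    (hΩ₀ : Ω₀.PosDef) (y : Fin p → ℝ) :
    ContinuousAt (fun x : ℝ × (Fin p → Fin p → ℝ) => tDensity x.1 (Matrix.of x.2) y)
      (ν₀, fun i j => Ω₀ i j) := by
  have hof : Continuous fun x : ℝ × (Fin p → Fin p → ℝ) => Matrix.of x.2 := continuous_snd
  have hinv : ContinuousAt (fun x : ℝ × (Fin p → Fin p → ℝ) => (Matrix.of x.2)⁻¹)
      (ν₀, fun i j => Ω₀ i j) := by
    have hRi : ContinuousAt (Ring.inverse : ℝ → ℝ) Ω₀.det := by
      rw [Ring.inverse_eq_inv']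
      exact continuousAt_inv₀ hΩ₀.det_pos.ne'
    exact (continuousAt_matrix_inv _ hRi).comp hof.continuousAt
  have hQ : ContinuousAt (fun x : ℝ × (Fin p → Fin p → ℝ) => y ⬝ᵥ (Matrix.of x.2)⁻¹ *ᵥ y)
      (ν₀, fun i j => Ω₀ i j) := by
    have hM : Continuous fun M : Matrix (Fin p) (Fin p) ℝ => y ⬝ᵥ M *ᵥ y :=
      continuous_const.dotProduct (continuous_id.matrix_mulVec continuous_const)
    exact hM.continuousAt.comp hinv
  have hbase : ContinuousAt (fun x : ℝ × (Fin p → Fin p → ℝ) =>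
      1 + y ⬝ᵥ (Matrix.of x.2)⁻¹ *ᵥ y / x.1) (ν₀, fun i j => Ω₀ i j) :=
    continuousAt_const.add (hQ.div continuousAt_fst hν₀.ne')
  have hbpos : (0:ℝ) < 1 + y ⬝ᵥ Ω₀⁻¹ *ᵥ y / ν₀ :=
    lt_of_lt_of_le one_pos (base_one_le hν₀ hΩ₀ y)
  have hexp : ContinuousAt (fun x : ℝ × (Fin p → Fin p → ℝ) => -(x.1 + (p:ℝ)) / 2)
      (ν₀, fun i j => Ω₀ i j) :=
    ((continuous_fst.add continuous_const).neg.div_const 2).continuousAt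
  have hrpow := ContinuousAt.rpow hbase hexp (Or.inl hbpos.ne')
  exact (cT_contAt hν₀ hΩ₀).mul hrpow

set_option maxHeartbeats 1000000 in
lemma klT_continuousWithinAt {p : ℕ} {ν₀ : ℝ} (hν₀ : 2 < ν₀) {Ω₀ : Matrix (Fin p) (Fin p) ℝ}
    (hΩ₀ : Ω₀.PosDef) :
    ContinuousWithinAt (fun x : ℝ × (Fin p → Fin p → ℝ) => klT ν₀ Ω₀ x.1 (Matrix.of x.2))
      {x : ℝ × (Fin p → Fin p → ℝ) | 2 < x.1 ∧ (Matrix.of x.2).PosDef}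
      (ν₀, fun i j => Ω₀ i j) := by
  obtain ⟨m, hm, hmq⟩ := exists_quad_lower Ω₀⁻¹ hΩ₀.inv
  have hν₀0 : (0:ℝ) < ν₀ := by linarith
  unfold klT
  apply continuousWithinAt_of_dominated
    (bound := fun y : Fin p → ℝ =>
      (2 * (|Real.log (cT p ν₀ Ω₀)| + 1) +
        (ν₀ + 1 + p) * (2 * Real.sqrt (max 1 ((∑ i, ∑ j, |Ω₀⁻¹ i j|) + 1)))) *
        (cT p ν₀ Ω₀ * (min 1 (m / ν₀)) ^ (-((ν₀ + p) / 2))) * 2 ^ ((ν₀ + p) / 2 - 1 / 2) *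
        (1 + ‖y‖) ^ (-(ν₀ + (p : ℝ) - 1)))
  · -- measurability
    refine eventually_mem_nhdsWithin.mono fun x hx => ?_
    have hx1 : (0:ℝ) < x.1 := by linarith [hx.1]
    have hc₀ := tDensity_continuous hν₀0 hΩ₀
    have hcx := tDensity_continuous hx1 hx.2
    exact ((((hc₀.div hcx fun y => (tDensity_pos hx1 hx.2 y).ne').log
      fun y => (div_pos (tDensity_pos hν₀0 hΩ₀ y) (tDensity_pos hx1 hx.2 y)).ne').mul
      hc₀).aestronglyMeasurable)
  · -- bound
    have hof : Continuous fun x : ℝ × (Fin p → Fin p → ℝ) => Matrix.of x.2 := continuous_snd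
    have hinv : ContinuousAt (fun x : ℝ × (Fin p → Fin p → ℝ) => (Matrix.of x.2)⁻¹)
        (ν₀, fun i j => Ω₀ i j) := by
      have hRi : ContinuousAt (Ring.inverse : ℝ → ℝ) Ω₀.det := by
        rw [Ring.inverse_eq_inv']
        exact continuousAt_inv₀ hΩ₀.det_pos.ne'
      exact (continuousAt_matrix_inv _ hRi).comp hof.continuousAt
    have hofΩ : Matrix.of (fun i j => Ω₀ i j) = Ω₀ := rfl
    have e1 : ∀ᶠ x : ℝ × (Fin p → Fin p → ℝ) in 𝓝 (ν₀, fun i j => Ω₀ i j),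
        |x.1 - ν₀| ≤ 1 := by
      have hc : ContinuousAt (fun x : ℝ × (Fin p → Fin p → ℝ) => |x.1 - ν₀|)
          (ν₀, fun i j => Ω₀ i j) := (continuous_fst.sub continuous_const).abs.continuousAt
      have h1' : Tendsto (fun x : ℝ × (Fin p → Fin p → ℝ) => |x.1 - ν₀|)
          (𝓝 (ν₀, fun i j => Ω₀ i j)) (𝓝 |ν₀ - ν₀|) := hc
      have h1 : Tendsto (fun x : ℝ × (Fin p → Fin p → ℝ) => |x.1 - ν₀|)
          (𝓝 (ν₀, fun i j => Ω₀ i j)) (𝓝 0) := by simpa using h1'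
      exact h1.eventually_le_const one_pos
    have e2 : ∀ᶠ x : ℝ × (Fin p → Fin p → ℝ) in 𝓝 (ν₀, fun i j => Ω₀ i j),
        (∑ i, ∑ j, |(Matrix.of x.2)⁻¹ i j - Ω₀⁻¹ i j|) ≤ 1 := by
      have hentry : ∀ i j : Fin p,
          Tendsto (fun x : ℝ × (Fin p → Fin p → ℝ) => |(Matrix.of x.2)⁻¹ i j - Ω₀⁻¹ i j|)
            (𝓝 (ν₀, fun i j => Ω₀ i j)) (𝓝 0) := by
        intro i j
        have hc : ContinuousAt
            (fun x : ℝ × (Fin p → Fin p → ℝ) => |(Matrix.of x.2)⁻¹ i j - Ω₀⁻¹ i j|)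
            (ν₀, fun i j => Ω₀ i j) :=
          ((((continuous_apply j).comp (continuous_apply i)).continuousAt.comp
            hinv).sub continuousAt_const).abs
        have hc' : Tendsto
            (fun x : ℝ × (Fin p → Fin p → ℝ) => |(Matrix.of x.2)⁻¹ i j - Ω₀⁻¹ i j|)
            (𝓝 (ν₀, fun i j => Ω₀ i j)) (𝓝 |Ω₀⁻¹ i j - Ω₀⁻¹ i j|) := hc
        simpa using hc'
      have h1 := tendsto_finset_sum (Finset.univ : Finset (Fin p))
        (fun i _ => tendsto_finset_sum (Finset.univ : Finset (Fin p))
          (fun j _ => hentry i j))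
      have h2 : Tendsto
          (fun x : ℝ × (Fin p → Fin p → ℝ) => ∑ i, ∑ j, |(Matrix.of x.2)⁻¹ i j - Ω₀⁻¹ i j|)
          (𝓝 (ν₀, fun i j => Ω₀ i j)) (𝓝 0) := by simpa using h1
      exact h2.eventually_le_const one_pos
    have e3 : ∀ᶠ x : ℝ × (Fin p → Fin p → ℝ) in 𝓝 (ν₀, fun i j => Ω₀ i j),
        |Real.log (cT p x.1 (Matrix.of x.2)) - Real.log (cT p ν₀ Ω₀)| ≤ 1 := by
      have hcT := cT_contAt hν₀0 hΩ₀
      have hlog : ContinuousAt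
          (fun x : ℝ × (Fin p → Fin p → ℝ) => Real.log (cT p x.1 (Matrix.of x.2)))
          (ν₀, fun i j => Ω₀ i j) := hcT.log (cT_pos hν₀0 hΩ₀).ne'
      have h3 : Tendsto
          (fun x : ℝ × (Fin p → Fin p → ℝ) =>
            |Real.log (cT p x.1 (Matrix.of x.2)) - Real.log (cT p ν₀ Ω₀)|)
          (𝓝 (ν₀, fun i j => Ω₀ i j)) (𝓝 0) := by
        have hc' : Tendsto
            (fun x : ℝ × (Fin p → Fin p → ℝ) =>
              |Real.log (cT p x.1 (Matrix.of x.2)) - Real.log (cT p ν₀ Ω₀)|)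
            (𝓝 (ν₀, fun i j => Ω₀ i j))
            (𝓝 |Real.log (cT p ν₀ (Matrix.of (fun i j => Ω₀ i j))) - Real.log (cT p ν₀ Ω₀)|) :=
          (hlog.sub continuousAt_const).abs
        rw [hofΩ] at hc'
        simpa using hc'
      exact h3.eventually_le_const one_pos
    filter_upwards [e1.filter_mono nhdsWithin_le_nhds, e2.filter_mono nhdsWithin_le_nhds,
      e3.filter_mono nhdsWithin_le_nhds, eventually_mem_nhdsWithin] with x h1 h2 h3 hxS
    refine Eventually.of_forall fun y => ?_
    have hb := master_bound hν₀ hΩ₀ hm hmq hxS.1 hxS.2 h1 h2 h3 y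
    rw [Real.norm_eq_abs]
    exact hb
  · -- integrability of the bound
    have hfr : ((Module.finrank ℝ (Fin p → ℝ) : ℝ)) < ν₀ + p - 1 := by
      rw [Module.finrank_fin_fun]
      linarith
    exact (integrable_one_add_norm hfr).const_mul _
  · -- continuity in the parameter
    refine Eventually.of_forall fun y => ContinuousAt.continuousWithinAt ?_
    have hd := tDensity_contAt hν₀0 hΩ₀ y
    have hdne : tDensity ν₀ Ω₀ y ≠ 0 := (tDensity_pos hν₀0 hΩ₀ y).ne'
    exact ((continuousAt_const.div hd hdne).log (div_ne_zero hdne hdne)).mul continuousAt_const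

lemma klT_self {p : ℕ} (ν₀ : ℝ) (Ω₀ : Matrix (Fin p) (Fin p) ℝ) : klT ν₀ Ω₀ ν₀ Ω₀ = 0 := by
  unfold klT
  have h : ∀ y : Fin p → ℝ,
      Real.log (tDensity ν₀ Ω₀ y / tDensity ν₀ Ω₀ y) * tDensity ν₀ Ω₀ y = 0 := by
    intro y
    rcases eq_or_ne (tDensity ν₀ Ω₀ y) 0 with h0 | h0
    · rw [h0, mul_zero]
    · rw [div_self h0, Real.log_one, zero_mul]
  simp only [h]
  exact integral_zero _ _

set_option maxHeartbeats 1000000 in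
/-- Theorem 2: fix `ν₀ > 2` and PD `Ω₀`. For every `ε > 0` there is
`ε* > 0` such that `|ν − ν₀| < ε*` and `d_∞(Ω, Ω₀) < ε*` (for `ν > 2`, `Ω` PD) imply
`KL((ν₀,Ω₀),(ν,Ω)) < ε`. -/
theorem stmt14 {p : ℕ} (ν₀ : ℝ) (hν₀ : 2 < ν₀) (Ω₀ : Matrix (Fin p) (Fin p) ℝ)
    (hΩ₀ : Ω₀.PosDef) :
    ∀ ε > (0 : ℝ), ∃ εstar > (0 : ℝ),
      ∀ (ν : ℝ) (Ω : Matrix (Fin p) (Fin p) ℝ), 2 < ν → Ω.PosDef →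
        |ν - ν₀| < εstar → (∀ i j, |Ω i j - Ω₀ i j| < εstar) →
        klT ν₀ Ω₀ ν Ω < ε := by
  intro ε hε
  have hcw := klT_continuousWithinAt hν₀ hΩ₀
  have h0 : klT ν₀ Ω₀ ν₀ (Matrix.of (fun i j => Ω₀ i j)) = 0 := klT_self ν₀ Ω₀
  have ht : Tendsto (fun x : ℝ × (Fin p → Fin p → ℝ) => klT ν₀ Ω₀ x.1 (Matrix.of x.2))
      (𝓝[{x : ℝ × (Fin p → Fin p → ℝ) | 2 < x.1 ∧ (Matrix.of x.2).PosDef}]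
        (ν₀, fun i j => Ω₀ i j)) (𝓝 0) := by
    have hcw' : Tendsto (fun x : ℝ × (Fin p → Fin p → ℝ) => klT ν₀ Ω₀ x.1 (Matrix.of x.2))
        (𝓝[{x : ℝ × (Fin p → Fin p → ℝ) | 2 < x.1 ∧ (Matrix.of x.2).PosDef}]
          (ν₀, fun i j => Ω₀ i j)) (𝓝 (klT ν₀ Ω₀ ν₀ (Matrix.of (fun i j => Ω₀ i j)))) := hcw
    rwa [h0] at hcw'
  have hev : ∀ᶠ x : ℝ × (Fin p → Fin p → ℝ) in
      𝓝[{x : ℝ × (Fin p → Fin p → ℝ) | 2 < x.1 ∧ (Matrix.of x.2).PosDef}]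
        (ν₀, fun i j => Ω₀ i j), klT ν₀ Ω₀ x.1 (Matrix.of x.2) < ε :=
    ht.eventually_lt_const hε
  rw [eventually_nhdsWithin_iff, Metric.eventually_nhds_iff] at hev
  obtain ⟨δ, hδ0, hδ⟩ := hev
  refine ⟨δ, hδ0, fun ν Ω hν hΩ hνd hΩd => ?_⟩
  have hx : dist ((ν, fun i j => Ω i j) : ℝ × (Fin p → Fin p → ℝ))
      (ν₀, fun i j => Ω₀ i j) < δ := by
    rw [Prod.dist_eq]
    apply max_lt
    · rw [Real.dist_eq]; exact hνd
    · refine (dist_pi_lt_iff hδ0).mpr fun i => (dist_pi_lt_iff hδ0).mpr fun j => ?_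
      rw [Real.dist_eq]; exact hΩd i j
  have hmem : ((ν, fun i j => Ω i j) : ℝ × (Fin p → Fin p → ℝ)) ∈
      {x : ℝ × (Fin p → Fin p → ℝ) | 2 < x.1 ∧ (Matrix.of x.2).PosDef} := ⟨hν, hΩ⟩
  exact hδ hx hmem
end
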